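/- Let Q be a minimal conjunctive query and 𝒱 a finite set of views. The following are equivalent: (a) Q is 𝒱-rewritable; (b) there is a cover partition for Q over 𝒱; (c) there is a consistent cover partition for Q over 𝒱. Moreover, if 𝒞 is a consistent cover partition for Q over 𝒱, then the induced query Q_𝒞 is a 𝒱-rewriting of Q. -/
import Mathlib


/-- A relational atom (or fact): a relation symbol with a list of arguments.
Arguments are natural numbers, serving both as variables and as data values. -/
structure Atom where
  rel : ℕ
  args : List ℕ
deriving DecidableEq

/-- Apply a substitution to an atom. -/
def mapAtom (f : ℕ → ℕ) (A : Atom) : Atom := ⟨A.rel, A.args.map f⟩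

/-- The variables of an atom. -/
def Atom.vars (A : Atom) : Finset ℕ := A.args.toFinset

/-- The variables of a finite set of atoms. -/
def varsOf (B : Finset Atom) : Finset ℕ := B.biUnion Atom.vars

/-- A conjunctive query: a head atom and a finite set of body atoms. -/
structure CQ where
  head : Atom
  body : Finset Atom
deriving DecidableEq

/-- All variables of a conjunctive query. -/
def CQ.vars (Q : CQ) : Finset ℕ := Q.head.vars ∪ varsOf Q.body

/-- A schema: a set of relation symbols together with an arity function. -/
structure Schema where
  rels : Set ℕ
  ar : ℕ → ℕ

/-- An atom (or fact) over a schema. -/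
def atomOver (σ : Schema) (A : Atom) : Prop :=
  A.rel ∈ σ.rels ∧ A.args.length = σ.ar A.rel

/-- `Q` is a (well-formed) conjunctive query over schema `σ`:
nonempty body of σ-atoms, head relation symbol not in σ, and safety. -/
def isCQ (σ : Schema) (Q : CQ) : Prop :=
  Q.body.Nonempty ∧ (∀ A ∈ Q.body, atomOver σ A) ∧
  Q.head.rel ∉ σ.rels ∧ Q.head.vars ⊆ varsOf Q.body

/-- A database is a set of facts (finiteness is imposed where needed). -/
abbrev Database := Set Atom

/-- A database over a schema. -/
def isDBOver (σ : Schema) (D : Database) : Prop := ∀ F ∈ D, atomOver σ F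

/-- The result of a conjunctive query on a database. -/
def evalCQ (Q : CQ) (D : Database) : Set Atom :=
  { F | ∃ ν : ℕ → ℕ, (∀ A ∈ Q.body, mapAtom ν A ∈ D) ∧ mapAtom ν Q.head = F }

/-- Containment of conjunctive queries. -/
def containedCQ (Q1 Q2 : CQ) : Prop :=
  ∀ D : Database, D.Finite → evalCQ Q1 D ⊆ evalCQ Q2 D

/-- Equivalence of conjunctive queries. -/
def equivCQ (Q1 Q2 : CQ) : Prop :=
  ∀ D : Database, D.Finite → evalCQ Q1 D = evalCQ Q2 D

/-- A conjunctive query is minimal if no equivalent CQ has strictly fewer body atoms. -/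
def isMinimal (Q : CQ) : Prop :=
  ∀ Q2 : CQ, equivCQ Q Q2 → Q.body.card ≤ Q2.body.card

/-- A homomorphism from `Q2` to `Q1`. -/
def isHom (h : ℕ → ℕ) (Q2 Q1 : CQ) : Prop :=
  (∀ A ∈ Q2.body, mapAtom h A ∈ Q1.body) ∧ mapAtom h Q2.head = Q1.head

/-- A body homomorphism from `Q2` to `Q1`. -/
def isBodyHom (h : ℕ → ℕ) (Q2 Q1 : CQ) : Prop :=
  ∀ A ∈ Q2.body, mapAtom h A ∈ Q1.body

/-- A set of views over σ: each view is a CQ over σ and views have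
pairwise distinct head relation symbols. -/
def isViewSet (σ : Schema) (𝒱 : Finset CQ) : Prop :=
  (∀ V ∈ 𝒱, isCQ σ V) ∧
  ∀ V ∈ 𝒱, ∀ W ∈ 𝒱, V ≠ W → V.head.rel ≠ W.head.rel

/-- The 𝒱-defined database 𝒱(D). -/
def viewDB (𝒱 : Finset CQ) (D : Database) : Database :=
  ⋃ V ∈ 𝒱, evalCQ V D

/-- `Q'` is a CQ over the schema σ_𝒱 of the head relations of the views 𝒱. -/
def overViews (𝒱 : Finset CQ) (Q' : CQ) : Prop :=
  Q'.body.Nonempty ∧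
  (∀ A ∈ Q'.body, ∃ V ∈ 𝒱, A.rel = V.head.rel ∧ A.args.length = V.head.args.length) ∧
  (∀ V ∈ 𝒱, Q'.head.rel ≠ V.head.rel) ∧
  Q'.head.vars ⊆ varsOf Q'.body

/-- `Q'` is a 𝒱-rewriting of `Q`: `Q'` is over σ_𝒱 and `Q'(𝒱(D)) = Q(D)`
for every (finite) database `D` over σ. -/
def isRewriting (σ : Schema) (𝒱 : Finset CQ) (Q Q' : CQ) : Prop :=
  overViews 𝒱 Q' ∧
  ∀ D : Database, D.Finite → isDBOver σ D →
    evalCQ Q' (viewDB 𝒱 D) = evalCQ Q D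

/-- `T` is a join tree for the atom set `B`. -/
def joinTreeProp (B : Finset Atom) (T : SimpleGraph {A : Atom // A ∈ B}) : Prop :=
  T.IsTree ∧
  ∀ (x : ℕ) (A A' : {A : Atom // A ∈ B}) (p : T.Walk A A'), p.IsPath →
    x ∈ A.1.vars → x ∈ A'.1.vars → ∀ C ∈ p.support, x ∈ C.1.vars

/-- The atom set `B` has a join tree. -/
def hasJoinTree (B : Finset Atom) : Prop :=
  ∃ T : SimpleGraph {A : Atom // A ∈ B}, joinTreeProp B T

/-- A conjunctive query is acyclic if its body has a join tree. -/
def isAcyclicCQ (Q : CQ) : Prop := hasJoinTree Q.body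

/-- A conjunctive query is free-connex acyclic. -/
def isFreeConnex (Q : CQ) : Prop :=
  isAcyclicCQ Q ∧ hasJoinTree (insert Q.head Q.body)

/-- The bridge variables of `𝒜 ⊆ body(Q)`. -/
def bvars (Q : CQ) (𝒜 : Finset Atom) : Finset ℕ :=
  varsOf 𝒜 ∩ (Q.head.vars ∪ varsOf (Q.body \ 𝒜))

/-- An application of a view `V`: a substitution that does not unify any
quantified variable of `V` with another variable of `V`. -/
def isApplication (V : CQ) (α : ℕ → ℕ) : Prop :=
  ∀ x ∈ varsOf V.body, x ∉ V.head.vars →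
    ∀ y ∈ CQ.vars V, y ≠ x → α x ≠ α y

/-- The query α(V). -/
def applyCQ (α : ℕ → ℕ) (V : CQ) : CQ :=
  ⟨mapAtom α V.head, V.body.image (mapAtom α)⟩

/-- `(𝒜, V, α, ψ)` is a cover description for `Q`. -/
def isCoverDesc (Q : CQ) (𝒜 : Finset Atom) (V : CQ) (α ψ : ℕ → ℕ) : Prop :=
  𝒜 ⊆ Q.body ∧ isApplication V α ∧
  𝒜 ⊆ V.body.image (mapAtom α) ∧
  bvars Q 𝒜 ⊆ V.head.vars.image α ∧
  isBodyHom ψ (applyCQ α V) Q ∧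
  ∀ x ∈ varsOf 𝒜, ψ x = x

/-- A cover partition for `Q` over `𝒱`: a collection of cover descriptions
whose atom sets partition `body(Q)`. -/
def isCoverPartition (Q : CQ) (𝒱 : Finset CQ) (m : ℕ)
    (𝒜 : Fin m → Finset Atom) (V : Fin m → CQ) (α ψ : Fin m → ℕ → ℕ) : Prop :=
  (∀ i, V i ∈ 𝒱 ∧ isCoverDesc Q (𝒜 i) (V i) (α i) (ψ i)) ∧
  ∀ A ∈ Q.body, ∃! i, A ∈ 𝒜 i

/-- Consistency of a cover partition: a variable of any `α_j(V_j)` lies in the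
range of another `α_i` only if it also lies in `bvars(𝒜_j)`. -/
def isConsistent (Q : CQ) (m : ℕ) (𝒜 : Fin m → Finset Atom) (V : Fin m → CQ)
    (α : Fin m → ℕ → ℕ) : Prop :=
  ∀ i j : Fin m, i ≠ j → ∀ z ∈ CQ.vars (applyCQ (α j) (V j)),
    (∃ x ∈ CQ.vars (V i), α i x = z) → z ∈ bvars Q (𝒜 j)

/-- The query `Q_𝒞` induced by a (consistent) cover partition. -/
def inducedCQ (Q : CQ) (m : ℕ) (V : Fin m → CQ) (α : Fin m → ℕ → ℕ) : CQ :=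
  ⟨Q.head, Finset.image (fun i => mapAtom (α i) (V i).head) Finset.univ⟩

/-- Quantified variable disjointness for a family of view applications. -/
def QVD (m : ℕ) (V : Fin m → CQ) (α : Fin m → ℕ → ℕ) : Prop :=
  ∀ i j : Fin m, i ≠ j → ∀ x ∈ varsOf (V i).body, x ∉ (V i).head.vars →
    ∀ y ∈ CQ.vars (V j), α i x ≠ α j y

/-- `QE` is an expansion of `Q'` with respect to the views `𝒱`. -/
def isExpansion (𝒱 : Finset CQ) (Q' QE : CQ) : Prop :=
  ∃ (m : ℕ) (A' : Fin m → Atom) (V : Fin m → CQ) (α : Fin m → ℕ → ℕ),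
    (∀ i, V i ∈ 𝒱 ∧ isApplication (V i) (α i) ∧ A' i = mapAtom (α i) (V i).head) ∧
    Q'.body = Finset.image A' Finset.univ ∧
    QVD m V α ∧
    QE.head = Q'.head ∧
    QE.body = Finset.biUnion Finset.univ (fun i => (V i).body.image (mapAtom (α i)))

/-- `atoms(x)`: the body atoms of `Q` containing the variable `x`. -/
def atomsWith (Q : CQ) (x : ℕ) : Finset Atom :=
  Q.body.filter (fun A => x ∈ A.vars)

/-- Hierarchical conjunctive queries. -/
def isHierarchical (Q : CQ) : Prop :=
  ∀ x y : ℕ, atomsWith Q x ⊆ atomsWith Q y ∨ atomsWith Q y ⊆ atomsWith Q x ∨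
    atomsWith Q x ∩ atomsWith Q y = ∅

/-- q-hierarchical conjunctive queries. -/
def isQHierarchical (Q : CQ) : Prop :=
  isHierarchical Q ∧ ∀ x y : ℕ, atomsWith Q x ⊂ atomsWith Q y →
    x ∈ Q.head.vars → y ∈ Q.head.vars

/-- `P` is a partition of `body(Q)` witnessing weak head arity at most `k`. -/
def witnessesWHA (Q : CQ) (k n : ℕ) (P : Fin n → Finset Atom) : Prop :=
  (∀ i, (P i).Nonempty) ∧ (∀ i, P i ⊆ Q.body) ∧ (∀ A ∈ Q.body, ∃! i, A ∈ P i) ∧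
  (∀ i, (varsOf (P i) ∩ Q.head.vars).card ≤ k) ∧
  (∀ i j, i ≠ j → ∀ x ∈ varsOf (P i), x ∈ varsOf (P j) → x ∈ Q.head.vars)

/-- `Q` has weak head arity at most `k`. -/
def hasWHAle (Q : CQ) (k : ℕ) : Prop := ∃ n P, witnessesWHA Q k n P

/-- The weak head arity of `Q`. -/
noncomputable def weakHeadArity (Q : CQ) : ℕ := sInf {k | hasWHAle Q k}

/-- The cover graph of `Q`: vertices are the body atoms, with an edge between
two atoms iff they share a variable not occurring in the head. -/
def coverGraph (Q : CQ) : SimpleGraph {A : Atom // A ∈ Q.body} :=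
  SimpleGraph.fromRel (fun A B => ∃ x, x ∈ A.1.vars ∧ x ∈ B.1.vars ∧ x ∉ Q.head.vars)

/-- A subset `s` of the atom set `B` is connected in the (join) tree `T`. -/
def connectedIn (B : Finset Atom) (T : SimpleGraph {A : Atom // A ∈ B}) (s : Finset Atom) : Prop :=
  (T.induce {A : {A : Atom // A ∈ B} | A.1 ∈ s}).Connected

section Aux

open Classical

lemma mem_vars {A : Atom} {x : ℕ} : x ∈ A.vars ↔ x ∈ A.args := List.mem_toFinset

lemma vars_mapAtom (f : ℕ → ℕ) (A : Atom) : (mapAtom f A).vars = A.vars.image f := by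
  ext x
  simp [Atom.vars, mapAtom, List.mem_toFinset, List.mem_map, Finset.mem_image, eq_comm]

lemma mapAtom_comp (f g : ℕ → ℕ) (A : Atom) : mapAtom f (mapAtom g A) = mapAtom (f ∘ g) A := by
  simp [mapAtom]

lemma mapAtom_id (A : Atom) : mapAtom id A = A := by simp [mapAtom]

lemma mapAtom_congr {f g : ℕ → ℕ} {A : Atom} (h : ∀ x ∈ A.vars, f x = g x) :
    mapAtom f A = mapAtom g A := by
  simp only [mapAtom, Atom.mk.injEq, true_and]
  exact List.map_congr_left (fun x hx => h x (mem_vars.mpr hx))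

lemma mem_varsOf {B : Finset Atom} {x : ℕ} : x ∈ varsOf B ↔ ∃ A ∈ B, x ∈ A.vars :=
  Finset.mem_biUnion

lemma varsOf_mono {B B' : Finset Atom} (h : B ⊆ B') : varsOf B ⊆ varsOf B' := by
  intro x hx
  obtain ⟨A, hA, hxA⟩ := mem_varsOf.mp hx
  exact mem_varsOf.mpr ⟨A, h hA, hxA⟩

lemma evalCQ_mono {P : CQ} {D D' : Database} (h : D ⊆ D') : evalCQ P D ⊆ evalCQ P D' := by
  rintro F ⟨ν, hb, hh⟩
  exact ⟨ν, fun A hA => h (hb A hA), hh⟩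

theorem map_rel_mem {l₁ l₂ : List ℕ} {f g : ℕ → ℕ} (h : l₁.map f = l₂.map g) {x : ℕ}
    (hx : x ∈ l₁) : ∃ y ∈ l₂, f x = g y := by
  obtain ⟨i, hi, rfl⟩ := List.mem_iff_getElem.mp hx
  have hlen : l₁.length = l₂.length := by
    have := congrArg List.length h; simpa using this
  have hi2 : i < l₂.length := hlen ▸ hi
  refine ⟨l₂[i], List.getElem_mem _, ?_⟩
  have : (l₁.map f)[i]'(by simpa using hi) = (l₂.map g)[i]'(by simpa using hi2) := by
    simp only [h]
  simpa using this

/-- atom-level version of `map_rel_mem` -/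
lemma atom_rel_mem {A B : Atom} {f g : ℕ → ℕ} (h : mapAtom f A = mapAtom g B) {x : ℕ}
    (hx : x ∈ A.vars) : ∃ y ∈ B.vars, f x = g y := by
  have hargs : A.args.map f = B.args.map g := congrArg Atom.args h
  obtain ⟨y, hy, hxy⟩ := map_rel_mem hargs (mem_vars.mp hx)
  exact ⟨y, mem_vars.mpr hy, hxy⟩

lemma map_eq_on {A : Atom} {f g : ℕ → ℕ} (h : mapAtom f A = mapAtom g A) :
    ∀ x ∈ A.vars, f x = g x := by
  intro x hx
  have hargs : A.args.map f = A.args.map g := congrArg Atom.args h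
  exact List.map_inj_left.mp hargs x (mem_vars.mp hx)

lemma applied_vars {f : ℕ → ℕ} {P : CQ} {z : ℕ} (hz : z ∈ CQ.vars (applyCQ f P)) :
    ∃ y ∈ CQ.vars P, f y = z := by
  rcases Finset.mem_union.mp hz with h | h
  · rw [applyCQ] at h
    simp only [vars_mapAtom, Finset.mem_image] at h
    obtain ⟨y, hy, hyz⟩ := h
    exact ⟨y, Finset.mem_union.mpr (Or.inl hy), hyz⟩
  · rw [applyCQ] at h
    obtain ⟨A, hA, hzA⟩ := mem_varsOf.mp h
    obtain ⟨B, hB, rfl⟩ := Finset.mem_image.mp hA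
    rw [vars_mapAtom] at hzA
    obtain ⟨y, hy, hyz⟩ := Finset.mem_image.mp hzA
    exact ⟨y, Finset.mem_union.mpr (Or.inr (mem_varsOf.mpr ⟨B, hB, hy⟩)), hyz⟩

lemma vars_sub_applied_body {f : ℕ → ℕ} {P : CQ} {B : Atom} (hB : B ∈ P.body) :
    (mapAtom f B).vars ⊆ CQ.vars (applyCQ f P) := by
  intro z hz
  refine Finset.mem_union.mpr (Or.inr ?_)
  exact mem_varsOf.mpr ⟨mapAtom f B, Finset.mem_image_of_mem _ hB, hz⟩

lemma vars_sub_applied_head {f : ℕ → ℕ} {P : CQ} :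
    (mapAtom f P.head).vars ⊆ CQ.vars (applyCQ f P) := by
  intro z hz
  exact Finset.mem_union.mpr (Or.inl hz)

lemma mem_viewDB {𝒱 : Finset CQ} {D : Database} {F : Atom} :
    F ∈ viewDB 𝒱 D ↔ ∃ V ∈ 𝒱, F ∈ evalCQ V D := by
  simp [viewDB]

end Aux
theorem coverToRewriting (σ : Schema) (Q : CQ) (𝒱 : Finset CQ)
    (hQ : isCQ σ Q) (h𝒱 : isViewSet σ 𝒱)
    (hfresh : ∀ V ∈ 𝒱, Q.head.rel ≠ V.head.rel)
    {m : ℕ} {𝒜 : Fin m → Finset Atom} {V : Fin m → CQ} {α ψ : Fin m → ℕ → ℕ}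
    (hcp : isCoverPartition Q 𝒱 m 𝒜 V α ψ) (hcons : isConsistent Q m 𝒜 V α) :
    isRewriting σ 𝒱 Q (inducedCQ Q m V α) := by
  classical
  obtain ⟨hdesc, hpart⟩ := hcp
  have hVin : ∀ i, V i ∈ 𝒱 := fun i => (hdesc i).1
  have h𝒜sub : ∀ i, 𝒜 i ⊆ Q.body := fun i => (hdesc i).2.1
  have happ : ∀ i, isApplication (V i) (α i) := fun i => (hdesc i).2.2.1
  have h𝒜img : ∀ i, 𝒜 i ⊆ (V i).body.image (mapAtom (α i)) := fun i => (hdesc i).2.2.2.1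
  have hbv : ∀ i, bvars Q (𝒜 i) ⊆ (V i).head.vars.image (α i) := fun i => (hdesc i).2.2.2.2.1
  have hψ : ∀ i, isBodyHom (ψ i) (applyCQ (α i) (V i)) Q := fun i => (hdesc i).2.2.2.2.2.1
  have hψid : ∀ i, ∀ x ∈ varsOf (𝒜 i), ψ i x = x := fun i => (hdesc i).2.2.2.2.2.2
  -- representation of variables of 𝒜 i via α i
  have hrep : ∀ (j : Fin m) (z : ℕ), z ∈ varsOf (𝒜 j) →
      ∃ x ∈ CQ.vars (V j), α j x = z ∧ x ∈ varsOf (V j).body := by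
    intro j z hz
    obtain ⟨A, hA, hzA⟩ := mem_varsOf.mp hz
    obtain ⟨B, hB, rfl⟩ := Finset.mem_image.mp (h𝒜img j hA)
    rw [vars_mapAtom] at hzA
    obtain ⟨x, hx, hxz⟩ := Finset.mem_image.mp hzA
    exact ⟨x, Finset.mem_union.mpr (Or.inr (mem_varsOf.mpr ⟨B, hB, hx⟩)), hxz,
      mem_varsOf.mpr ⟨B, hB, hx⟩⟩
  have hbridge : ∀ i j : Fin m, i ≠ j → ∀ z : ℕ, z ∈ varsOf (𝒜 i) → z ∈ varsOf (𝒜 j) →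
      z ∈ bvars Q (𝒜 i) := by
    intro i j hij z hzi hzj
    obtain ⟨A', hA', hzA'⟩ := mem_varsOf.mp hzj
    have hA'Q : A' ∈ Q.body := h𝒜sub j hA'
    have hA'ni : A' ∉ 𝒜 i := by
      intro hmem
      obtain ⟨k, _, huniq⟩ := hpart A' hA'Q
      exact hij ((huniq i hmem).trans (huniq j hA').symm)
    refine Finset.mem_inter.mpr ⟨hzi, Finset.mem_union.mpr (Or.inr ?_)⟩
    exact mem_varsOf.mpr ⟨A', Finset.mem_sdiff.mpr ⟨hA'Q, hA'ni⟩, hzA'⟩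
  have hbvsub : ∀ i, bvars Q (𝒜 i) ⊆ varsOf (𝒜 i) := fun i => Finset.inter_subset_left
  constructor
  · -- overViews
    refine ⟨?_, ?_, ?_, ?_⟩
    · obtain ⟨A, hA⟩ := hQ.1
      obtain ⟨i, hi, _⟩ := hpart A hA
      exact ⟨mapAtom (α i) (V i).head,
        Finset.mem_image.mpr ⟨i, Finset.mem_univ i, rfl⟩⟩
    · intro At hAt
      obtain ⟨i, _, rfl⟩ := Finset.mem_image.mp hAt
      exact ⟨V i, hVin i, rfl, by simp [mapAtom]⟩
    · intro W hW
      exact hfresh W hW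
    · intro w hw
      have hwb : w ∈ varsOf Q.body := hQ.2.2.2 hw
      obtain ⟨A, hA, hwA⟩ := mem_varsOf.mp hwb
      obtain ⟨i, hi, _⟩ := hpart A hA
      have hwbv : w ∈ bvars Q (𝒜 i) :=
        Finset.mem_inter.mpr ⟨mem_varsOf.mpr ⟨A, hi, hwA⟩,
          Finset.mem_union.mpr (Or.inl hw)⟩
      obtain ⟨y₀, hy₀, hy₀w⟩ := Finset.mem_image.mp (hbv i hwbv)
      refine mem_varsOf.mpr ⟨mapAtom (α i) (V i).head,
        Finset.mem_image.mpr ⟨i, Finset.mem_univ i, rfl⟩, ?_⟩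
      rw [vars_mapAtom]
      exact Finset.mem_image.mpr ⟨y₀, hy₀, hy₀w⟩
  · -- semantic equality
    intro D _ _
    apply Set.eq_of_subset_of_subset
    · -- evalCQ (inducedCQ ...) (viewDB 𝒱 D) ⊆ evalCQ Q D
      rintro F ⟨νt, hbt, hht⟩
      have hfact : ∀ i : Fin m, ∃ μ : ℕ → ℕ, (∀ B ∈ (V i).body, mapAtom μ B ∈ D) ∧
          mapAtom μ (V i).head = mapAtom νt (mapAtom (α i) (V i).head) := by
        intro i
        have hmem : mapAtom νt (mapAtom (α i) (V i).head) ∈ viewDB 𝒱 D :=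
          hbt _ (Finset.mem_image.mpr ⟨i, Finset.mem_univ i, rfl⟩)
        obtain ⟨W, hW, hWmem⟩ := mem_viewDB.mp hmem
        obtain ⟨μ, hμb, hμh⟩ := hWmem
        have hrel : W.head.rel = (V i).head.rel := by
          have := congrArg Atom.rel hμh
          simpa [mapAtom] using this
        have hWV : W = V i := by
          by_contra hne
          exact h𝒱.2 W hW (V i) (hVin i) hne hrel
        subst hWV
        exact ⟨μ, hμb, hμh⟩
      choose μ hμb hμh using hfact
      have hμhead : ∀ i, ∀ y ∈ (V i).head.vars, μ i y = νt (α i y) := by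
        intro i y hy
        have h1 : mapAtom (μ i) (V i).head = mapAtom (νt ∘ α i) (V i).head := by
          rw [hμh i, mapAtom_comp]
        exact map_eq_on h1 y hy
      have hSameVal : ∀ i y, y ∈ varsOf (V i).body → α i y ∈ bvars Q (𝒜 i) →
          μ i y = νt (α i y) := by
        intro i y hy hbvm
        by_cases hyh : y ∈ (V i).head.vars
        · exact hμhead i y hyh
        · obtain ⟨y₀, hy₀, hy₀e⟩ := Finset.mem_image.mp (hbv i hbvm)
          have hne : y₀ ≠ y := fun h => hyh (h ▸ hy₀)
          exact absurd hy₀e.symm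
            (happ i y hy hyh y₀ (Finset.mem_union.mpr (Or.inl hy₀)) hne)
      have hrepval : ∀ (i : Fin m) (y : ℕ) (j : Fin m) (z : ℕ),
          y ∈ varsOf (V i).body → z ∈ varsOf (V j).body → α i y = α j z →
          α i y ∈ varsOf (𝒜 i) → α j z ∈ varsOf (𝒜 j) → μ i y = μ j z := by
        intro i y j z hy hz heq h1 h2
        by_cases hij : i = j
        · subst hij
          by_cases hyz : y = z
          · rw [hyz]
          · by_cases hyh : y ∈ (V i).head.vars
            · by_cases hzh : z ∈ (V i).head.vars
              · rw [hμhead i y hyh, hμhead i z hzh, heq]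
              · exact absurd heq.symm (happ i z hz hzh y
                  (Finset.mem_union.mpr (Or.inr hy)) hyz)
            · exact absurd heq (happ i y hy hyh z
                (Finset.mem_union.mpr (Or.inr hz)) (fun h => hyz h.symm))
        · have hb1 : α i y ∈ bvars Q (𝒜 i) := hbridge i j hij _ h1 (heq ▸ h2)
          have hb2 : α j z ∈ bvars Q (𝒜 j) := hbridge j i (fun h => hij h.symm) _ h2
            (heq ▸ h1)
          rw [hSameVal i y hy hb1, hSameVal j z hz hb2, heq]
      -- build the valuation for Q
      have hexists : ∃ ν : ℕ → ℕ,
          (∀ (i : Fin m) (y : ℕ), y ∈ varsOf (V i).body → α i y ∈ varsOf (𝒜 i) →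
            ν (α i y) = μ i y) ∧ (∀ w ∈ Q.head.vars, ν w = νt w) := by
        refine ⟨fun v => if hv : ∃ p : Fin m × ℕ, p.2 ∈ varsOf (V p.1).body ∧
            α p.1 p.2 = v ∧ v ∈ varsOf (𝒜 p.1) then μ hv.choose.1 hv.choose.2
            else νt v, ?_, ?_⟩
        · intro i y hy h𝒜v
          have hv : ∃ p : Fin m × ℕ, p.2 ∈ varsOf (V p.1).body ∧
              α p.1 p.2 = α i y ∧ α i y ∈ varsOf (𝒜 p.1) := ⟨(i, y), hy, rfl, h𝒜v⟩
          simp only [dif_pos hv]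
          obtain ⟨hz1, hz2, hz3⟩ := hv.choose_spec
          exact hrepval hv.choose.1 hv.choose.2 i y hz1 hy hz2 (by rw [hz2]; exact hz3) h𝒜v
        · intro w hw
          by_cases hv : ∃ p : Fin m × ℕ, p.2 ∈ varsOf (V p.1).body ∧
              α p.1 p.2 = w ∧ w ∈ varsOf (𝒜 p.1)
          · simp only [dif_pos hv]
            obtain ⟨hz1, hz2, hz3⟩ := hv.choose_spec
            have hbvm : α hv.choose.1 hv.choose.2 ∈ bvars Q (𝒜 hv.choose.1) := by
              rw [hz2]
              exact Finset.mem_inter.mpr ⟨hz3, Finset.mem_union.mpr (Or.inl hw)⟩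
            rw [hSameVal hv.choose.1 hv.choose.2 hz1 hbvm, hz2]
          · simp only [dif_neg hv]
      obtain ⟨ν, hν1, hν2⟩ := hexists
      refine ⟨ν, ?_, ?_⟩
      · intro A hA
        obtain ⟨i, hi, _⟩ := hpart A hA
        obtain ⟨B, hB, hBe⟩ := Finset.mem_image.mp (h𝒜img i hi)
        have hAe : mapAtom ν A = mapAtom (μ i) B := by
          rw [← hBe, mapAtom_comp]
          apply mapAtom_congr
          intro y hy
          have h1 : y ∈ varsOf (V i).body := mem_varsOf.mpr ⟨B, hB, hy⟩
          have h2 : α i y ∈ varsOf (𝒜 i) := by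
            refine mem_varsOf.mpr ⟨mapAtom (α i) B, hBe ▸ hi, ?_⟩
            rw [vars_mapAtom]
            exact Finset.mem_image_of_mem _ hy
          exact hν1 i y h1 h2
        rw [hAe]
        exact hμb i B hB
      · have : mapAtom ν Q.head = mapAtom νt Q.head := mapAtom_congr hν2
        rw [this]
        exact hht
    · -- evalCQ Q D ⊆ evalCQ (inducedCQ ...) (viewDB 𝒱 D)
      rintro F ⟨ν, hb, hh⟩
      set Pz : ℕ → Prop := fun z => ∃ i : Fin m, z ∈ CQ.vars (applyCQ (α i) (V i)) with hPz
      set ν' : ℕ → ℕ := fun z => if z ∈ varsOf Q.body then ν z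
        else if hp : Pz z then ν (ψ hp.choose z) else ν z with hν'
      have key : ∀ (i : Fin m), ∀ z ∈ CQ.vars (applyCQ (α i) (V i)), ν' z = ν (ψ i z) := by
        intro i z hz
        by_cases hzb : z ∈ varsOf Q.body
        · have hψz : ψ i z = z := by
            by_cases hz𝒜 : z ∈ varsOf (𝒜 i)
            · exact hψid i z hz𝒜
            · obtain ⟨A, hA, hzA⟩ := mem_varsOf.mp hzb
              obtain ⟨j, hj, _⟩ := hpart A hA
              have hzj : z ∈ varsOf (𝒜 j) := mem_varsOf.mpr ⟨A, hj, hzA⟩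
              have hij : j ≠ i := fun h => hz𝒜 (h ▸ hzj)
              obtain ⟨x, hx, hxz, _⟩ := hrep j z hzj
              have := hcons j i hij z hz ⟨x, hx, hxz⟩
              exact absurd (hbvsub i this) hz𝒜
          rw [hν']
          simp only [if_pos hzb, hψz]
        · have hp : Pz z := ⟨i, hz⟩
          have hchoice : ν' z = ν (ψ hp.choose z) := by
            rw [hν']
            simp only [if_neg hzb, dif_pos hp]
          have hieq : hp.choose = i := by
            by_contra hne
            obtain ⟨x, hx, hxz⟩ := applied_vars hp.choose_spec
            have := hcons hp.choose i hne z hz ⟨x, hx, hxz⟩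
            exact hzb (varsOf_mono (h𝒜sub i) (hbvsub i this))
          rw [hchoice, hieq]
      refine ⟨ν', ?_, ?_⟩
      · intro At hAt
        obtain ⟨i, _, rfl⟩ := Finset.mem_image.mp hAt
        refine mem_viewDB.mpr ⟨V i, hVin i, ν' ∘ α i, ?_, ?_⟩
        · intro B hB
          have h1 : mapAtom (ν' ∘ α i) B = mapAtom ν' (mapAtom (α i) B) :=
            (mapAtom_comp _ _ _).symm
          have h2 : mapAtom ν' (mapAtom (α i) B) = mapAtom (ν ∘ ψ i) (mapAtom (α i) B) := by
            apply mapAtom_congr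
            intro x hx
            exact key i x (vars_sub_applied_body hB hx)
          have h3 : mapAtom (ψ i) (mapAtom (α i) B) ∈ Q.body := by
            apply hψ i
            exact Finset.mem_image_of_mem _ hB
          rw [h1, h2, ← mapAtom_comp]
          exact hb _ h3
        · exact (mapAtom_comp _ _ _).symm
      · have h1 : mapAtom ν' Q.head = mapAtom ν Q.head := by
          apply mapAtom_congr
          intro x hx
          have hxb : x ∈ varsOf Q.body := hQ.2.2.2 hx
          rw [hν']
          simp only [if_pos hxb]
        show mapAtom ν' Q.head = F
        rw [h1]
        exact hh
lemma applied_vars_mem {f : ℕ → ℕ} {P : CQ} {y : ℕ} (hy : y ∈ CQ.vars P) :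
    f y ∈ CQ.vars (applyCQ f P) := by
  rcases Finset.mem_union.mp hy with h | h
  · apply Finset.mem_union.mpr (Or.inl _)
    show f y ∈ (mapAtom f P.head).vars
    rw [vars_mapAtom]
    exact Finset.mem_image_of_mem _ h
  · obtain ⟨B, hB, hyB⟩ := mem_varsOf.mp h
    apply vars_sub_applied_body hB
    rw [vars_mapAtom]
    exact Finset.mem_image_of_mem _ hyB

lemma pair_eq_pair {a b c d : ℕ} (h : Nat.pair a b = Nat.pair c d) : a = c ∧ b = d := by
  have h1 := congrArg Nat.unpair h
  rw [Nat.unpair_pair, Nat.unpair_pair] at h1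
  exact ⟨congrArg Prod.fst h1, congrArg Prod.snd h1⟩

theorem coverToConsistent (Q : CQ) (𝒱 : Finset CQ)
    {m : ℕ} {𝒜 : Fin m → Finset Atom} {V : Fin m → CQ} {α ψ : Fin m → ℕ → ℕ}
    (hcp : isCoverPartition Q 𝒱 m 𝒜 V α ψ) :
    ∃ (α' ψ' : Fin m → ℕ → ℕ),
      isCoverPartition Q 𝒱 m 𝒜 V α' ψ' ∧ isConsistent Q m 𝒜 V α' := by
  classical
  obtain ⟨hdesc, hpart⟩ := hcp
  have hVin : ∀ i, V i ∈ 𝒱 := fun i => (hdesc i).1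
  have h𝒜sub : ∀ i, 𝒜 i ⊆ Q.body := fun i => (hdesc i).2.1
  have happ : ∀ i, isApplication (V i) (α i) := fun i => (hdesc i).2.2.1
  have h𝒜img : ∀ i, 𝒜 i ⊆ (V i).body.image (mapAtom (α i)) := fun i => (hdesc i).2.2.2.1
  have hbv : ∀ i, bvars Q (𝒜 i) ⊆ (V i).head.vars.image (α i) := fun i => (hdesc i).2.2.2.2.1
  have hψ : ∀ i, isBodyHom (ψ i) (applyCQ (α i) (V i)) Q := fun i => (hdesc i).2.2.2.2.2.1
  have hψid : ∀ i, ∀ x ∈ varsOf (𝒜 i), ψ i x = x := fun i => (hdesc i).2.2.2.2.2.2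
  have hbvsub : ∀ i, bvars Q (𝒜 i) ⊆ varsOf (𝒜 i) := fun i => Finset.inter_subset_left
  have hbridge : ∀ i j : Fin m, i ≠ j → ∀ z : ℕ, z ∈ varsOf (𝒜 i) → z ∈ varsOf (𝒜 j) →
      z ∈ bvars Q (𝒜 i) := by
    intro i j hij z hzi hzj
    obtain ⟨A', hA', hzA'⟩ := mem_varsOf.mp hzj
    have hA'Q : A' ∈ Q.body := h𝒜sub j hA'
    have hA'ni : A' ∉ 𝒜 i := by
      intro hmem
      obtain ⟨k, _, huniq⟩ := hpart A' hA'Q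
      exact hij ((huniq i hmem).trans (huniq j hA').symm)
    refine Finset.mem_inter.mpr ⟨hzi, Finset.mem_union.mpr (Or.inr ?_)⟩
    exact mem_varsOf.mpr ⟨A', Finset.mem_sdiff.mpr ⟨hA'Q, hA'ni⟩, hzA'⟩
  set big : Finset ℕ := varsOf Q.body ∪
    Finset.univ.biUnion (fun i => CQ.vars (applyCQ (α i) (V i))) with hbigdef
  set N : ℕ := big.sup id + 1 with hNdef
  have hbig : ∀ v ∈ big, v < N := fun v hv =>
    Nat.lt_succ_of_le (Finset.le_sup (f := id) hv)
  have h𝒜N : ∀ (i : Fin m), ∀ z ∈ varsOf (𝒜 i), z < N := fun i z hz =>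
    hbig z (Finset.mem_union.mpr (Or.inl (varsOf_mono (h𝒜sub i) hz)))
  have hαval : ∀ (i : Fin m), ∀ z ∈ CQ.vars (V i), α i z < N := fun i z hz =>
    hbig _ (Finset.mem_union.mpr (Or.inr (Finset.mem_biUnion.mpr
      ⟨i, Finset.mem_univ i, applied_vars_mem hz⟩)))
  set r : Fin m → ℕ → ℕ := fun i z =>
    if z ∈ varsOf (𝒜 i) then z else N + Nat.pair i.val z with hrdef
  set s : Fin m → ℕ → ℕ := fun i v =>
    if N ≤ v ∧ (Nat.unpair (v - N)).1 = i.val then (Nat.unpair (v - N)).2 else v with hsdef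
  have hrinj : ∀ (i : Fin m) (a b : ℕ), r i a = r i b → a = b := by
    intro i a b hab
    rw [hrdef] at hab
    simp only at hab
    by_cases ha : a ∈ varsOf (𝒜 i) <;> by_cases hb : b ∈ varsOf (𝒜 i)
    · rw [if_pos ha, if_pos hb] at hab; exact hab
    · rw [if_pos ha, if_neg hb] at hab
      have := h𝒜N i a ha; omega
    · rw [if_neg ha, if_pos hb] at hab
      have := h𝒜N i b hb; omega
    · rw [if_neg ha, if_neg hb] at hab
      have : Nat.pair i.val a = Nat.pair i.val b := by omega
      exact (pair_eq_pair this).2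
  have hsr : ∀ (i : Fin m) (a : ℕ), a < N → s i (r i a) = a := by
    intro i a haN
    rw [hrdef, hsdef]
    simp only
    by_cases ha : a ∈ varsOf (𝒜 i)
    · rw [if_pos ha, if_neg (by omega)]
    · rw [if_neg ha, if_pos (by constructor; omega; simp [Nat.add_sub_cancel_left, Nat.unpair_pair])]
      simp [Nat.add_sub_cancel_left, Nat.unpair_pair]
  refine ⟨fun i => r i ∘ α i, fun i => ψ i ∘ s i, ⟨?_, hpart⟩, ?_⟩
  · intro i
    refine ⟨hVin i, h𝒜sub i, ?_, ?_, ?_, ?_, ?_⟩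
    · -- application
      intro x hx hxh y hy hyx
      intro hEq
      exact happ i x hx hxh y hy hyx (hrinj i _ _ hEq)
    · -- 𝒜 i ⊆ image
      intro A hA
      obtain ⟨B, hB, hBe⟩ := Finset.mem_image.mp (h𝒜img i hA)
      refine Finset.mem_image.mpr ⟨B, hB, ?_⟩
      have h1 : mapAtom (r i ∘ α i) B = mapAtom (r i) (mapAtom (α i) B) :=
        (mapAtom_comp _ _ _).symm
      rw [h1, hBe]
      have h2 : mapAtom (r i) A = mapAtom id A := by
        apply mapAtom_congr
        intro v hv
        have hv𝒜 : v ∈ varsOf (𝒜 i) := mem_varsOf.mpr ⟨A, hA, hv⟩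
        rw [hrdef]
        simp only [if_pos hv𝒜, id]
      rw [h2, mapAtom_id]
    · -- bvars
      intro w hw
      obtain ⟨y₀, hy₀, hy₀e⟩ := Finset.mem_image.mp (hbv i hw)
      refine Finset.mem_image.mpr ⟨y₀, hy₀, ?_⟩
      have hw𝒜 : w ∈ varsOf (𝒜 i) := hbvsub i hw
      show r i (α i y₀) = w
      rw [hy₀e, hrdef]
      simp only [if_pos hw𝒜]
    · -- body hom
      intro At hAt
      obtain ⟨C, hC, rfl⟩ := Finset.mem_image.mp hAt
      have h1 : mapAtom (ψ i ∘ s i) (mapAtom (r i ∘ α i) C) =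
          mapAtom (ψ i ∘ s i ∘ r i ∘ α i) C := by
        rw [mapAtom_comp]; rfl
      rw [h1]
      have h2 : mapAtom (ψ i ∘ s i ∘ r i ∘ α i) C = mapAtom (ψ i ∘ α i) C := by
        apply mapAtom_congr
        intro z hz
        have hzc : z ∈ CQ.vars (V i) :=
          Finset.mem_union.mpr (Or.inr (mem_varsOf.mpr ⟨C, hC, hz⟩))
        show ψ i (s i (r i (α i z))) = ψ i (α i z)
        rw [hsr i (α i z) (hαval i z hzc)]
      rw [h2, ← mapAtom_comp]
      exact hψ i _ (Finset.mem_image_of_mem _ hC)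
    · -- identity on vars 𝒜 i
      intro x hx
      have hxN : x < N := h𝒜N i x hx
      show ψ i (s i x) = x
      rw [hsdef]
      simp only [if_neg (by omega : ¬(N ≤ x ∧ (Nat.unpair (x - N)).1 = i.val))]
      exact hψid i x hx
  · -- consistency
    intro i j hij z hz hx
    obtain ⟨x, hxv, hxz⟩ := hx
    obtain ⟨w, hwv, hwz⟩ := applied_vars hz
    have hb : α j w < N := hαval j w hwv
    have ha : α i x < N := hαval i x hxv
    rw [hrdef] at hwz hxz
    simp only [Function.comp_apply] at hwz hxz
    by_cases hbm : α j w ∈ varsOf (𝒜 j)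
    · rw [if_pos hbm] at hwz
      by_cases ham : α i x ∈ varsOf (𝒜 i)
      · rw [if_pos ham] at hxz
        have hzi : z ∈ varsOf (𝒜 i) := hxz ▸ ham
        have hzj : z ∈ varsOf (𝒜 j) := hwz ▸ hbm
        exact hbridge j i (fun h => hij h.symm) z hzj hzi
      · rw [if_neg ham] at hxz
        omega
    · rw [if_neg hbm] at hwz
      by_cases ham : α i x ∈ varsOf (𝒜 i)
      · rw [if_pos ham] at hxz
        omega
      · rw [if_neg ham] at hxz
        have : Nat.pair i.val (α i x) = Nat.pair j.val (α j w) := by omega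
        exact absurd (Fin.ext (pair_eq_pair this).1) hij
lemma atomOver_mapAtom {σ : Schema} {A : Atom} (h : atomOver σ A) (f : ℕ → ℕ) :
    atomOver σ (mapAtom f A) := by
  refine ⟨h.1, ?_⟩
  show (A.args.map f).length = σ.ar A.rel
  rw [List.length_map]
  exact h.2

theorem rewritingToCover (σ : Schema) (Q : CQ) (𝒱 : Finset CQ)
    (hQ : isCQ σ Q) (hmin : isMinimal Q) (h𝒱 : isViewSet σ 𝒱)
    {Q' : CQ} (hrw : isRewriting σ 𝒱 Q Q') :
    ∃ (m : ℕ) (𝒜 : Fin m → Finset Atom) (V : Fin m → CQ) (α ψ : Fin m → ℕ → ℕ),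
      isCoverPartition Q 𝒱 m 𝒜 V α ψ := by
  classical
  -- Stage A : canonical database
  set D₁ : Database := (↑Q.body : Set Atom) with hD₁def
  have hD₁fin : D₁.Finite := Q.body.finite_toSet
  have hD₁over : isDBOver σ D₁ := fun F hF => hQ.2.1 F hF
  have hQin : Q.head ∈ evalCQ Q D₁ := by
    refine ⟨id, fun A hA => ?_, mapAtom_id _⟩
    rw [mapAtom_id]; exact hA
  have hQ'in : Q.head ∈ evalCQ Q' (viewDB 𝒱 D₁) := by
    rw [hrw.2 D₁ hD₁fin hD₁over]; exact hQin
  obtain ⟨ν', hν'b, hν'h⟩ := hQ'in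
  set m : ℕ := Q'.body.card with hmdef
  have hm : 0 < m := Finset.card_pos.mpr hrw.1.1
  set e := Q'.body.equivFin with hedef
  set A' : Fin m → Atom := fun i => (e.symm i).1 with hA'def
  have hA'mem : ∀ i, A' i ∈ Q'.body := fun i => (e.symm i).2
  have hA'cover : ∀ B ∈ Q'.body, ∃ i, A' i = B := by
    intro B hB
    refine ⟨e ⟨B, hB⟩, ?_⟩
    rw [hA'def]; simp
  have hviews : ∀ i : Fin m, ∃ (W : CQ) (μ : ℕ → ℕ), W ∈ 𝒱 ∧
      (∀ B ∈ W.body, mapAtom μ B ∈ Q.body) ∧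
      mapAtom μ W.head = mapAtom ν' (A' i) := by
    intro i
    obtain ⟨W, hW, hWmem⟩ := mem_viewDB.mp (hν'b (A' i) (hA'mem i))
    obtain ⟨μ, hμb, hμh⟩ := hWmem
    exact ⟨W, μ, hW, fun B hB => hμb B hB, hμh⟩
  choose V μ hVin hμb hμh using hviews
  -- Stage B : fresh variables and the expansion
  set big : Finset ℕ := varsOf Q.body ∪ Q.head.vars ∪
    Finset.univ.biUnion (fun i => (CQ.vars (V i)).image (μ i)) with hbigdef
  set N : ℕ := big.sup id + 1 with hNdef
  have hbig : ∀ v ∈ big, v < N := fun v hv =>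
    Nat.lt_succ_of_le (Finset.le_sup (f := id) hv)
  have hSN : ∀ v ∈ varsOf Q.body, v < N := fun v hv =>
    hbig v (by rw [hbigdef]; exact Finset.mem_union.mpr (Or.inl (Finset.mem_union.mpr (Or.inl hv))))
  have hheadN : ∀ v ∈ Q.head.vars, v < N := fun v hv =>
    hbig v (by rw [hbigdef]; exact Finset.mem_union.mpr (Or.inl (Finset.mem_union.mpr (Or.inr hv))))
  have hμN : ∀ (i : Fin m), ∀ z ∈ CQ.vars (V i), μ i z < N := fun i z hz =>
    hbig _ (by
      rw [hbigdef]
      exact Finset.mem_union.mpr (Or.inr (Finset.mem_biUnion.mpr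
        ⟨i, Finset.mem_univ i, Finset.mem_image_of_mem _ hz⟩)))
  set αh : Fin m → ℕ → ℕ := fun i z =>
    if z ∈ (V i).head.vars then μ i z else N + Nat.pair i.val z with hαhdef
  set h : ℕ → ℕ := fun v =>
    if v < N then v
    else if hp : (Nat.unpair (v - N)).1 < m then μ ⟨(Nat.unpair (v - N)).1, hp⟩ ((Nat.unpair (v - N)).2)
    else v with hhdef
  have h_id_small : ∀ v, v < N → h v = v := by
    intro v hv; rw [hhdef]; simp only [if_pos hv]
  have khαh : ∀ (i : Fin m), ∀ z ∈ CQ.vars (V i), h (αh i z) = μ i z := by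
    intro i z hz
    rw [hαhdef]
    by_cases hzh : z ∈ (V i).head.vars
    · simp only [if_pos hzh]
      exact h_id_small _ (hμN i z hz)
    · simp only [if_neg hzh]
      rw [hhdef]
      simp only
      rw [if_neg (by omega), Nat.add_sub_cancel_left, Nat.unpair_pair]
      simp only [i.isLt, dif_pos]
  have hαhfresh : ∀ (i : Fin m) (z : ℕ), z ∉ (V i).head.vars → αh i z = N + Nat.pair i.val z := by
    intro i z hz; rw [hαhdef]; simp only [if_neg hz]
  have hαhhead : ∀ (i : Fin m) (z : ℕ), z ∈ (V i).head.vars → αh i z = μ i z := by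
    intro i z hz; rw [hαhdef]; simp only [if_pos hz]
  set block : Fin m → Finset Atom := fun i => (V i).body.image (mapAtom (αh i)) with hblockdef
  set E : CQ := ⟨Q.head, Finset.univ.biUnion block⟩ with hEdef
  have hvarsbody : ∀ (i : Fin m), ∀ B ∈ (V i).body, ∀ z ∈ B.vars, z ∈ CQ.vars (V i) :=
    fun i B hB z hz => Finset.mem_union.mpr (Or.inr (mem_varsOf.mpr ⟨B, hB, hz⟩))
  have h_hom : ∀ At ∈ E.body, mapAtom h At ∈ Q.body := by
    intro At hAt
    obtain ⟨i, _, hAt⟩ := Finset.mem_biUnion.mp hAt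
    obtain ⟨B, hB, rfl⟩ := Finset.mem_image.mp hAt
    rw [mapAtom_comp]
    have : mapAtom (h ∘ αh i) B = mapAtom (μ i) B :=
      mapAtom_congr (fun z hz => khαh i z (hvarsbody i B hB z hz))
    rw [this]
    exact hμb i B hB
  have hhhead : mapAtom h Q.head = Q.head := by
    have : mapAtom h Q.head = mapAtom id Q.head :=
      mapAtom_congr (fun v hv => by rw [h_id_small v (hheadN v hv)]; rfl)
    rw [this, mapAtom_id]
  -- Stage C : E ≡ Q
  have hαhheadAtom : ∀ i : Fin m, mapAtom (αh i) (V i).head = mapAtom (μ i) (V i).head :=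
    fun i => mapAtom_congr (fun z hz => hαhhead i z hz)
  have hEQ : ∀ D : Database, D.Finite → evalCQ E D = evalCQ Q D := by
    intro D hDfin
    apply Set.eq_of_subset_of_subset
    · rintro F ⟨ν, hb, hh⟩
      set D' : Database := {F ∈ D | atomOver σ F} with hD'def
      have hD'sub : D' ⊆ D := fun F hF => hF.1
      have hD'fin : D'.Finite := hDfin.subset hD'sub
      have hD'over : isDBOver σ D' := fun F hF => hF.2
      have hb' : ∀ At ∈ E.body, mapAtom ν At ∈ D' := by
        intro At hAt
        refine ⟨hb At hAt, ?_⟩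
        obtain ⟨i, _, hAt2⟩ := Finset.mem_biUnion.mp hAt
        obtain ⟨B, hB, rfl⟩ := Finset.mem_image.mp hAt2
        exact atomOver_mapAtom (atomOver_mapAtom ((h𝒱.1 (V i) (hVin i)).2.1 B hB) _) _
      have hGi : ∀ i : Fin m, mapAtom (ν ∘ αh i) (V i).head ∈ evalCQ (V i) D' := by
        intro i
        refine ⟨ν ∘ αh i, fun B hB => ?_, rfl⟩
        rw [← mapAtom_comp]
        exact hb' _ (Finset.mem_biUnion.mpr ⟨i, Finset.mem_univ i,
          Finset.mem_image_of_mem _ hB⟩)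
      have hκ : mapAtom (ν ∘ ν') Q'.head ∈ evalCQ Q' (viewDB 𝒱 D') := by
        refine ⟨ν ∘ ν', fun B hB => ?_, rfl⟩
        obtain ⟨i, rfl⟩ := hA'cover B hB
        rw [← mapAtom_comp, ← hμh i, ← hαhheadAtom i, mapAtom_comp]
        exact mem_viewDB.mpr ⟨V i, hVin i, hGi i⟩
      rw [hrw.2 D' hD'fin hD'over] at hκ
      have hF : mapAtom (ν ∘ ν') Q'.head = F := by
        rw [← mapAtom_comp, hν'h]
        exact hh
      rw [hF] at hκ
      exact evalCQ_mono hD'sub hκ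
    · rintro F ⟨ν, hb, hh⟩
      refine ⟨ν ∘ h, fun At hAt => ?_, ?_⟩
      · rw [← mapAtom_comp]
        exact hb _ (h_hom At hAt)
      · show mapAtom (ν ∘ h) E.head = F
        have : E.head = Q.head := rfl
        rw [this, ← mapAtom_comp, hhhead]
        exact hh
  -- Stage D : a homomorphism g : Q → E, and minimality
  have hEin : Q.head ∈ evalCQ E (↑E.body : Set Atom) := by
    refine ⟨id, fun A hA => ?_, ?_⟩
    · rw [mapAtom_id]; exact hA
    · show mapAtom id E.head = Q.head
      rw [mapAtom_id]
  have hgin : Q.head ∈ evalCQ Q (↑E.body : Set Atom) := by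
    rw [← hEQ _ E.body.finite_toSet]; exact hEin
  obtain ⟨g, hgb, hgh⟩ := hgin
  set θ : ℕ → ℕ := h ∘ g with hθdef
  have hθb : ∀ A ∈ Q.body, mapAtom θ A ∈ Q.body := by
    intro A hA
    rw [hθdef, ← mapAtom_comp]
    exact h_hom _ (hgb A hA)
  have hθh : mapAtom θ Q.head = Q.head := by
    rw [hθdef, ← mapAtom_comp, hgh, hhhead]
  have himg : Q.body.image (mapAtom θ) = Q.body := by
    have hsub : Q.body.image (mapAtom θ) ⊆ Q.body :=
      Finset.image_subset_iff.mpr hθb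
    have hequiv : equivCQ Q ⟨Q.head, Q.body.image (mapAtom θ)⟩ := by
      intro D hDfin
      apply Set.eq_of_subset_of_subset
      · rintro F ⟨ν, hb, hh⟩
        exact ⟨ν, fun At hAt => hb At (hsub hAt), hh⟩
      · rintro F ⟨ν, hb, hh⟩
        refine ⟨ν ∘ θ, fun At hAt => ?_, ?_⟩
        · rw [← mapAtom_comp]
          exact hb _ (Finset.mem_image_of_mem _ hAt)
        · rw [← mapAtom_comp, hθh]
          exact hh
      -- note : goals might be swapped; fix later
    have hcard := hmin _ hequiv
    exact Finset.eq_of_subset_of_card_le hsub (le_trans hcard (le_of_eq rfl))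
  -- Stage E : normalize to get a homomorphism with h ∘ φ' = id on the variables of Q
  set S : Finset ℕ := varsOf Q.body with hSdef
  have hθS : ∀ v ∈ S, θ v ∈ S := by
    intro v hv
    obtain ⟨A, hA, hvA⟩ := mem_varsOf.mp hv
    refine mem_varsOf.mpr ⟨mapAtom θ A, hθb A hA, ?_⟩
    rw [vars_mapAtom]; exact Finset.mem_image_of_mem _ hvA
  have hθsurj : ∀ w ∈ S, ∃ v, v ∈ S ∧ θ v = w := by
    intro w hw
    obtain ⟨B, hB, hwB⟩ := mem_varsOf.mp hw
    rw [← himg] at hB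
    obtain ⟨A, hA, rfl⟩ := Finset.mem_image.mp hB
    rw [vars_mapAtom] at hwB
    obtain ⟨v, hv, hvw⟩ := Finset.mem_image.mp hwB
    exact ⟨v, mem_varsOf.mpr ⟨A, hA, hv⟩, hvw⟩
  set Φ : {v // v ∈ S} → {v // v ∈ S} := fun p => ⟨θ p.1, hθS p.1 p.2⟩ with hΦdef
  have hΦsurj : Function.Surjective Φ := by
    rintro ⟨w, hw⟩
    obtain ⟨v, hv, hvw⟩ := hθsurj w hw
    exact ⟨⟨v, hv⟩, Subtype.ext hvw⟩
  have hΦbij := Finite.surjective_iff_bijective.mp hΦsurj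
  set eΦ : Equiv.Perm {v // v ∈ S} := Equiv.ofBijective Φ hΦbij with heΦdef
  have hiter : ∀ (k : ℕ) (v : ℕ) (hv : v ∈ S), ((eΦ ^ k) ⟨v, hv⟩).1 = θ^[k] v := by
    intro k
    induction k with
    | zero => intro v hv; simp
    | succ k ih =>
      intro v hv
      have h1 : (eΦ ^ (k + 1)) ⟨v, hv⟩ = (eΦ ^ k) (eΦ ⟨v, hv⟩) := by
        rw [pow_succ]; rfl
      have h2 : eΦ ⟨v, hv⟩ = ⟨θ v, hθS v hv⟩ := rfl
      rw [h1, h2, ih (θ v) (hθS v hv), Function.iterate_succ_apply]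
  set M : ℕ := orderOf eΦ with hMdef
  have hMpos : 0 < M := orderOf_pos eΦ
  have hfix : ∀ v ∈ S, θ^[M] v = v := by
    intro v hv
    have h1 : ((eΦ ^ M) ⟨v, hv⟩).1 = θ^[M] v := hiter M v hv
    rw [hMdef, pow_orderOf_eq_one eΦ] at h1
    simpa using h1.symm
  set φ' : ℕ → ℕ := fun v => g (θ^[M - 1] v) with hφ'def
  have hiterb : ∀ (k : ℕ), ∀ A ∈ Q.body, mapAtom (θ^[k]) A ∈ Q.body := by
    intro k
    induction k with
    | zero => intro A hA; simpa [mapAtom_id] using hA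
    | succ k ih =>
      intro A hA
      have h1 : mapAtom (θ^[k + 1]) A = mapAtom θ (mapAtom (θ^[k]) A) := by
        rw [mapAtom_comp, ← Function.iterate_succ']
      rw [h1]
      exact hθb _ (ih A hA)
  have hφ'b : ∀ A ∈ Q.body, mapAtom φ' A ∈ E.body := by
    intro A hA
    have h1 : mapAtom φ' A = mapAtom g (mapAtom (θ^[M - 1]) A) := by
      rw [mapAtom_comp]; rfl
    rw [h1]
    exact hgb _ (hiterb (M - 1) A hA)
  have hhφ' : ∀ v ∈ S, h (φ' v) = v := by
    intro v hv
    show h (g (θ^[M - 1] v)) = v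
    have h1 : h (g (θ^[M - 1] v)) = θ^[M] v := by
      conv_rhs => rw [show M = (M - 1) + 1 by omega]
      rw [Function.iterate_succ_apply']
      rfl
    rw [h1]
    exact hfix v hv
  have hgid : ∀ v ∈ Q.head.vars, g v = v := by
    intro v hv
    have h1 : mapAtom g Q.head = mapAtom id Q.head := by rw [hgh, mapAtom_id]
    exact (map_eq_on h1 v hv).trans rfl
  have hθid : ∀ v ∈ Q.head.vars, θ v = v := by
    intro v hv
    show h (g v) = v
    rw [hgid v hv]
    exact h_id_small v (hheadN v hv)
  have hitid : ∀ (k : ℕ), ∀ v ∈ Q.head.vars, θ^[k] v = v := by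
    intro k
    induction k with
    | zero => intro v _; rfl
    | succ k ih =>
      intro v hv
      rw [Function.iterate_succ_apply', ih v hv]
      exact hθid v hv
  have hφ'head : ∀ v ∈ Q.head.vars, φ' v = v := by
    intro v hv
    show g (θ^[M - 1] v) = v
    rw [hitid (M - 1) v hv]
    exact hgid v hv
  -- Stage F : the cover partition
  have hcover : ∀ A ∈ Q.body, ∃ i : Fin m, mapAtom φ' A ∈ block i := by
    intro A hA
    obtain ⟨i, _, hmem⟩ := Finset.mem_biUnion.mp (hφ'b A hA)
    exact ⟨i, hmem⟩
  set f : Atom → Fin m := fun A =>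
    if hA : ∃ i : Fin m, mapAtom φ' A ∈ block i then hA.choose else ⟨0, hm⟩ with hfdef
  have hfblock : ∀ A ∈ Q.body, ∃ B ∈ (V (f A)).body,
      mapAtom (αh (f A)) B = mapAtom φ' A := by
    intro A hA
    have hex := hcover A hA
    have hfa : mapAtom φ' A ∈ block (f A) := by
      rw [hfdef]
      simp only [dif_pos hex]
      exact hex.choose_spec
    obtain ⟨B, hB, hBe⟩ := Finset.mem_image.mp hfa
    exact ⟨B, hB, hBe⟩
  set 𝒜 : Fin m → Finset Atom := fun i => Q.body.filter (fun A => f A = i) with h𝒜def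
  have h𝒜mem : ∀ {A : Atom} {i : Fin m}, A ∈ 𝒜 i ↔ A ∈ Q.body ∧ f A = i := by
    intro A i
    rw [h𝒜def]
    simp [Finset.mem_filter]
  have hpart : ∀ A ∈ Q.body, ∃! i, A ∈ 𝒜 i := by
    intro A hA
    exact ⟨f A, h𝒜mem.mpr ⟨hA, rfl⟩, fun j hj => ((h𝒜mem.mp hj).2).symm⟩
  set U : Fin m → Finset Atom := fun i =>
    (V i).body.filter (fun B => mapAtom (αh i) B ∈ (𝒜 i).image (mapAtom φ')) with hUdef
  set αc : Fin m → ℕ → ℕ := fun i z =>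
    if z ∈ varsOf (U i) then h (αh i z) else N + Nat.pair (m + i.val) z with hαcdef
  set ψc : Fin m → ℕ → ℕ := fun i v =>
    if N ≤ v ∧ (Nat.unpair (v - N)).1 = m + i.val then μ i ((Nat.unpair (v - N)).2) else v
    with hψcdef
  have h𝒜S : ∀ (i : Fin m), ∀ w ∈ varsOf (𝒜 i), w ∈ S := by
    intro i w hw
    obtain ⟨A, hA, hwA⟩ := mem_varsOf.mp hw
    exact mem_varsOf.mpr ⟨A, (h𝒜mem.mp hA).1, hwA⟩
  have hUrep : ∀ (i : Fin m) (x : ℕ), x ∈ varsOf (U i) →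
      ∃ w, w ∈ S ∧ φ' w = αh i x ∧ h (αh i x) = w := by
    intro i x hx
    obtain ⟨B, hB, hxB⟩ := mem_varsOf.mp hx
    rw [hUdef] at hB
    have hB' := Finset.mem_filter.mp hB
    obtain ⟨A, hA𝒜, hAe⟩ := Finset.mem_image.mp hB'.2
    obtain ⟨w, hwA, hwe⟩ := atom_rel_mem hAe.symm hxB
    have hwS : w ∈ S := mem_varsOf.mpr ⟨A, (h𝒜mem.mp hA𝒜).1, hwA⟩
    refine ⟨w, hwS, hwe.symm, ?_⟩
    rw [hwe]
    exact hhφ' w hwS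
  have hUc : ∀ (i : Fin m), ∀ x ∈ varsOf (U i), x ∈ CQ.vars (V i) := by
    intro i x hx
    obtain ⟨B, hB, hxB⟩ := mem_varsOf.mp hx
    rw [hUdef] at hB
    exact hvarsbody i B (Finset.mem_filter.mp hB).1 x hxB
  have happc : ∀ i, isApplication (V i) (αc i) := by
    intro i x hx hxh y hy hyx hEq
    have hxc : x ∈ CQ.vars (V i) := Finset.mem_union.mpr (Or.inr hx)
    rw [hαcdef] at hEq
    simp only at hEq
    by_cases hxU : x ∈ varsOf (U i) <;> by_cases hyU : y ∈ varsOf (U i)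
    · rw [if_pos hxU, if_pos hyU] at hEq
      obtain ⟨w, hwS, hw1, hw2⟩ := hUrep i x hxU
      obtain ⟨w', hw'S, hw'1, hw'2⟩ := hUrep i y hyU
      have hww : w = w' := by rw [← hw2, ← hw'2, hEq]
      have hαeq : αh i x = αh i y := by rw [← hw1, ← hw'1, hww]
      rw [hαhfresh i x hxh] at hαeq
      by_cases hyh : y ∈ (V i).head.vars
      · rw [hαhhead i y hyh] at hαeq
        have := hμN i y hy
        omega
      · rw [hαhfresh i y hyh] at hαeq
        have hpq := pair_eq_pair (by omega : Nat.pair i.val x = Nat.pair i.val y)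
        exact hyx hpq.2.symm
    · rw [if_pos hxU, if_neg hyU] at hEq
      rw [khαh i x hxc] at hEq
      have := hμN i x hxc
      omega
    · rw [if_neg hxU, if_pos hyU] at hEq
      rw [khαh i y hy] at hEq
      have := hμN i y hy
      omega
    · rw [if_neg hxU, if_neg hyU] at hEq
      have hpq := pair_eq_pair (by omega : Nat.pair (m + i.val) x = Nat.pair (m + i.val) y)
      exact hyx hpq.2.symm
  have h𝒜img : ∀ i, 𝒜 i ⊆ (V i).body.image (mapAtom (αc i)) := by
    intro i A hA
    have hAQ : A ∈ Q.body := (h𝒜mem.mp hA).1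
    obtain ⟨B, hB, hBe⟩ := hfblock A hAQ
    rw [(h𝒜mem.mp hA).2] at hBe hB
    have hBU : B ∈ U i := by
      rw [hUdef]
      exact Finset.mem_filter.mpr ⟨hB, Finset.mem_image.mpr ⟨A, hA, hBe.symm⟩⟩
    refine Finset.mem_image.mpr ⟨B, hB, ?_⟩
    have h1 : mapAtom (αc i) B = mapAtom (fun z => h (αh i z)) B := by
      apply mapAtom_congr
      intro z hz
      rw [hαcdef]
      simp only [if_pos (mem_varsOf.mpr ⟨B, hBU, hz⟩)]
    have h2 : mapAtom (fun z => h (αh i z)) B = mapAtom h (mapAtom (αh i) B) := by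
      rw [mapAtom_comp]; rfl
    rw [h1, h2, hBe, mapAtom_comp]
    have h3 : mapAtom (h ∘ φ') A = mapAtom id A :=
      mapAtom_congr (fun v hv => hhφ' v (mem_varsOf.mpr ⟨A, hAQ, hv⟩))
    rw [h3, mapAtom_id]
  have hbvc : ∀ i, bvars Q (𝒜 i) ⊆ (V i).head.vars.image (αc i) := by
    intro i w hw
    obtain ⟨hw𝒜, hwrest⟩ := Finset.mem_inter.mp hw
    obtain ⟨A, hA, hwA⟩ := mem_varsOf.mp hw𝒜
    have hAQ : A ∈ Q.body := (h𝒜mem.mp hA).1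
    have hwS : w ∈ S := mem_varsOf.mpr ⟨A, hAQ, hwA⟩
    obtain ⟨B, hB, hBe⟩ := hfblock A hAQ
    rw [(h𝒜mem.mp hA).2] at hBe hB
    have hBU : B ∈ U i := by
      rw [hUdef]
      exact Finset.mem_filter.mpr ⟨hB, Finset.mem_image.mpr ⟨A, hA, hBe.symm⟩⟩
    obtain ⟨z, hzB, hze⟩ := atom_rel_mem hBe.symm hwA
    -- hze : φ' w = αh i z
    have hzhead : z ∈ (V i).head.vars := by
      by_contra hzq
      rw [hαhfresh i z hzq] at hze
      rcases Finset.mem_union.mp hwrest with hwh | hwrest2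
      · rw [hφ'head w hwh] at hze
        have := hheadN w hwh
        omega
      · obtain ⟨A₂, hA₂, hwA₂⟩ := mem_varsOf.mp hwrest2
        have hA₂Q : A₂ ∈ Q.body := (Finset.mem_sdiff.mp hA₂).1
        have hA₂n : A₂ ∉ 𝒜 i := (Finset.mem_sdiff.mp hA₂).2
        have hji : f A₂ ≠ i := fun hfa => hA₂n (h𝒜mem.mpr ⟨hA₂Q, hfa⟩)
        obtain ⟨B₂, hB₂, hB₂e⟩ := hfblock A₂ hA₂Q
        obtain ⟨z₂, hz₂B, hz₂e⟩ := atom_rel_mem hB₂e.symm hwA₂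
        by_cases hz₂h : z₂ ∈ (V (f A₂)).head.vars
        · rw [hαhhead _ _ hz₂h] at hz₂e
          have := hμN (f A₂) z₂ (hvarsbody _ _ hB₂ _ hz₂B)
          omega
        · rw [hαhfresh _ _ hz₂h] at hz₂e
          rw [hze] at hz₂e
          have hpq := pair_eq_pair
            (by omega : Nat.pair i.val z = Nat.pair (f A₂).val z₂)
          exact hji (Fin.ext hpq.1.symm)
    refine Finset.mem_image.mpr ⟨z, hzhead, ?_⟩
    show αc i z = w
    rw [hαcdef]
    simp only [if_pos (mem_varsOf.mpr ⟨B, hBU, hzB⟩)]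
    rw [← hze]
    exact hhφ' w hwS
  have hψcmap : ∀ (i : Fin m), ∀ z ∈ CQ.vars (V i), ψc i (αc i z) = μ i z := by
    intro i z hzc
    rw [hαcdef]
    simp only
    by_cases hzU : z ∈ varsOf (U i)
    · rw [if_pos hzU, khαh i z hzc, hψcdef]
      have := hμN i z hzc
      simp only
      rw [if_neg (by omega : ¬(N ≤ μ i z ∧ (Nat.unpair (μ i z - N)).1 = m + i.val))]
    · rw [if_neg hzU, hψcdef]
      simp only
      rw [if_pos ?side]
      case side =>
        constructor
        · omega
        · rw [Nat.add_sub_cancel_left, Nat.unpair_pair]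
      rw [Nat.add_sub_cancel_left, Nat.unpair_pair]
  have hψchom : ∀ i, isBodyHom (ψc i) (applyCQ (αc i) (V i)) Q := by
    intro i At hAt
    obtain ⟨C, hC, rfl⟩ := Finset.mem_image.mp hAt
    rw [mapAtom_comp]
    have h1 : mapAtom (ψc i ∘ αc i) C = mapAtom (μ i) C :=
      mapAtom_congr (fun z hz => hψcmap i z (hvarsbody i C hC z hz))
    rw [h1]
    exact hμb i C hC
  have hψcid : ∀ (i : Fin m), ∀ x ∈ varsOf (𝒜 i), ψc i x = x := by
    intro i x hx
    have hxN : x < N := hSN x (h𝒜S i x hx)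
    rw [hψcdef]
    simp only
    rw [if_neg (by omega : ¬(N ≤ x ∧ (Nat.unpair (x - N)).1 = m + i.val))]
  exact ⟨m, 𝒜, V, αc, ψc, ⟨fun i => ⟨hVin i, Finset.filter_subset _ _, happc i,
    h𝒜img i, hbvc i, hψchom i, hψcid i⟩, hpart⟩⟩

/-- For a minimal CQ `Q` and a finite set `𝒱` of views, the following are
equivalent: (a) `Q` is 𝒱-rewritable, (b) there is a cover partition for `Q` over `𝒱`,
(c) there is a consistent cover partition for `Q` over `𝒱`. Moreover, if `𝒞` is a
consistent cover partition, then the induced query `Q_𝒞` is a 𝒱-rewriting of `Q`. -/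
theorem statement1 (σ : Schema) (Q : CQ) (𝒱 : Finset CQ)
    (hQ : isCQ σ Q) (hmin : isMinimal Q) (h𝒱 : isViewSet σ 𝒱)
    (hfresh : ∀ V ∈ 𝒱, Q.head.rel ≠ V.head.rel) :
    ((∃ Q', isRewriting σ 𝒱 Q Q') ↔
      (∃ (m : ℕ) (𝒜 : Fin m → Finset Atom) (V : Fin m → CQ) (α ψ : Fin m → ℕ → ℕ),
        isCoverPartition Q 𝒱 m 𝒜 V α ψ)) ∧
    ((∃ (m : ℕ) (𝒜 : Fin m → Finset Atom) (V : Fin m → CQ) (α ψ : Fin m → ℕ → ℕ),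
        isCoverPartition Q 𝒱 m 𝒜 V α ψ) ↔
      (∃ (m : ℕ) (𝒜 : Fin m → Finset Atom) (V : Fin m → CQ) (α ψ : Fin m → ℕ → ℕ),
        isCoverPartition Q 𝒱 m 𝒜 V α ψ ∧ isConsistent Q m 𝒜 V α)) ∧
    (∀ (m : ℕ) (𝒜 : Fin m → Finset Atom) (V : Fin m → CQ) (α ψ : Fin m → ℕ → ℕ),
      isCoverPartition Q 𝒱 m 𝒜 V α ψ → isConsistent Q m 𝒜 V α →
        isRewriting σ 𝒱 Q (inducedCQ Q m V α)) := by
  refine ⟨?_, ?_, ?_⟩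
  · constructor
    · rintro ⟨Q', hQ'⟩
      exact rewritingToCover σ Q 𝒱 hQ hmin h𝒱 hQ'
    · rintro ⟨m, 𝒜, V, α, ψ, hcp⟩
      obtain ⟨α', ψ', hcp', hcons⟩ := coverToConsistent Q 𝒱 hcp
      exact ⟨_, coverToRewriting σ Q 𝒱 hQ h𝒱 hfresh hcp' hcons⟩
  · constructor
    · rintro ⟨m, 𝒜, V, α, ψ, hcp⟩
      obtain ⟨α', ψ', hcp', hcons⟩ := coverToConsistent Q 𝒱 hcp
      exact ⟨m, 𝒜, V, α', ψ', hcp', hcons⟩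
    · rintro ⟨m, 𝒜, V, α, ψ, hcp, _⟩
      exact ⟨m, 𝒜, V, α, ψ, hcp⟩
  · intro m 𝒜 V α ψ hcp hcons
    exact coverToRewriting σ Q 𝒱 hQ h𝒱 hfresh hcp hcons
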